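/- Consider the identical-mobility model with no disease-induced mortality (δ = 0), in which all epidemiological classes use the same residence-time matrix M and N̄ = S* = Λ∘(1/μ). Assume all entries of B are positive, the u×u matrix M·Mᵀ is irreducible (i.e., for every pair (i,j) there exists an integer n ≥ 1 with ((MMᵀ)^n)_{ij} > 0), every column of M has a positive entry (so (MᵀN̄)_j > 0 for all j), and R0^Eq > 1, where R0^Eq = ρ(diag(S*)·M·diag(B)·diag(MᵀS*)⁻¹·Mᵀ·diag(ν)·diag((μ+ν)∘(μ+γ))⁻¹). Then there exists exactly one tuple (S,E,I,R) ∈ (ℝ^u)^4 with all entries of I positive satisfying 0 = Λ − diag(S)·M·diag(B)·diag(MᵀN̄)⁻¹·Mᵀ·I − diag(μ)·S + diag(η)·R, 0 = diag(S)·M·diag(B)·diag(MᵀN̄)⁻¹·Mᵀ·I − diag(ν+μ)·E, 0 = diag(ν)·E − diag(γ+μ)·I, and 0 = diag(γ)·I − diag(η+μ)·R. -/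

import Mathlib

open Matrix Filter

/-- Spectral radius of a real matrix: the largest modulus of a complex eigenvalue. -/
noncomputable def specRad {n : Type*} [Fintype n] [DecidableEq n] (A : Matrix n n ℝ) : ℝ :=
  sSup ((fun z : ℂ => ‖z‖) '' spectrum ℂ (A.map (fun x : ℝ => (x : ℂ))))

/-- From `specRad X > 1` with `X` nonnegative, extract a nonnegative nonzero
vector `w` and `r > 1` with `X w ≥ r w`. -/
lemma exists_subsolution' {u : ℕ} (X : Matrix (Fin u) (Fin u) ℝ)
    (hX : ∀ i j, 0 ≤ X i j) (h : 1 < specRad X) :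
    ∃ (r : ℝ) (w : Fin u → ℝ), 1 < r ∧ (∀ i, 0 ≤ w i) ∧ w ≠ 0 ∧
      ∀ i, r * w i ≤ (X *ᵥ w) i := by
  set Xc := X.map (fun x : ℝ => (x : ℂ)) with hXc
  obtain ⟨s, hs_mem, hs⟩ : ∃ s ∈ (fun z : ℂ => ‖z‖) '' spectrum ℂ Xc, 1 < s := by
    by_contra hcon
    push_neg at hcon
    rcases Set.eq_empty_or_nonempty ((fun z : ℂ => ‖z‖) '' spectrum ℂ Xc) with he | hne
    · rw [specRad, ← hXc, he, Real.sSup_empty] at h; linarith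
    · exact absurd (csSup_le hne hcon) (by rw [specRad, ← hXc] at h; linarith)
  obtain ⟨lam, hlam_mem, rfl⟩ := hs_mem
  -- get eigenvector
  rw [spectrum.mem_iff] at hlam_mem
  rw [Matrix.isUnit_iff_isUnit_det, isUnit_iff_ne_zero, not_not] at hlam_mem
  obtain ⟨z, hz_ne, hz⟩ := (Matrix.exists_mulVec_eq_zero_iff).2 hlam_mem
  have heig : Xc *ᵥ z = lam • z := by
    have : (algebraMap ℂ (Matrix (Fin u) (Fin u) ℂ)) lam *ᵥ z - Xc *ᵥ z = 0 := by
      rw [← Matrix.sub_mulVec]; exact hz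
    have h2 : (algebraMap ℂ (Matrix (Fin u) (Fin u) ℂ)) lam *ᵥ z = lam • z := by
      rw [Matrix.algebraMap_eq_diagonal]
      funext i
      simp [Matrix.mulVec_diagonal, Pi.algebraMap_apply, Algebra.algebraMap_self_apply]
    rw [h2] at this
    linear_combination (norm := module) -this
  refine ⟨‖lam‖, fun i => ‖z i‖, hs, fun i => norm_nonneg _, ?_, ?_⟩
  · intro hw
    apply hz_ne
    funext i
    have := congrFun hw i
    simpa using this
  · intro i
    have h1 : ‖lam‖ * ‖z i‖ = ‖(Xc *ᵥ z) i‖ := by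
      rw [heig]; simp
    rw [h1]
    have h2 : (Xc *ᵥ z) i = ∑ k, Xc i k * z k := rfl
    rw [h2]
    calc ‖∑ k, Xc i k * z k‖ ≤ ∑ k, ‖Xc i k * z k‖ :=
          norm_sum_le _ _
      _ = ∑ k, X i k * ‖z k‖ := by
          apply Finset.sum_congr rfl
          intro k _
          rw [norm_mul, hXc, Matrix.map_apply, Complex.norm_real, Real.norm_eq_abs, abs_of_nonneg (hX i k)]
      _ = (X *ᵥ (fun k => ‖z k‖)) i := rfl

lemma pow_entry_mono' {u : ℕ} (P Q : Matrix (Fin u) (Fin u) ℝ)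
    (h0 : ∀ i j, 0 ≤ P i j) (hPQ : ∀ i j, P i j ≤ Q i j) (n : ℕ) :
    ∀ i j, 0 ≤ (P ^ n) i j ∧ (P ^ n) i j ≤ (Q ^ n) i j := by
  induction n with
  | zero =>
    intro i j
    simp only [pow_zero]
    rcases eq_or_ne i j with rfl | hij
    · simp
    · simp [Matrix.one_apply_ne hij]
  | succ n ih =>
    intro i j
    rw [pow_succ, pow_succ]
    simp only [Matrix.mul_apply]
    constructor
    · apply Finset.sum_nonneg
      intro k _
      exact mul_nonneg (ih i k).1 (h0 k j)
    · apply Finset.sum_le_sum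
      intro k _
      exact mul_le_mul (ih i k).2 (hPQ k j) (h0 k j) (le_trans (ih i k).1 (ih i k).2)

section helpers

lemma mv_nonneg' {a b : ℕ} (A : Matrix (Fin a) (Fin b) ℝ) (hA : ∀ i j, 0 ≤ A i j)
    (x : Fin b → ℝ) (hx : ∀ k, 0 ≤ x k) : ∀ i, 0 ≤ (A *ᵥ x) i := by
  intro i
  simp only [Matrix.mulVec, dotProduct]
  exact Finset.sum_nonneg fun k _ => mul_nonneg (hA i k) (hx k)

lemma mv_mono' {a b : ℕ} (A : Matrix (Fin a) (Fin b) ℝ) (hA : ∀ i j, 0 ≤ A i j)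
    (x y : Fin b → ℝ) (hxy : ∀ k, x k ≤ y k) : ∀ i, (A *ᵥ x) i ≤ (A *ᵥ y) i := by
  intro i
  simp only [Matrix.mulVec, dotProduct]
  exact Finset.sum_le_sum fun k _ => mul_le_mul_of_nonneg_left (hxy k) (hA i k)

lemma mul_entries_nonneg {a b c : ℕ} (P : Matrix (Fin a) (Fin b) ℝ) (Q : Matrix (Fin b) (Fin c) ℝ)
    (hP : ∀ i j, 0 ≤ P i j) (hQ : ∀ i j, 0 ≤ Q i j) : ∀ i j, 0 ≤ (P * Q) i j := by
  intro i j
  rw [Matrix.mul_apply]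
  exact Finset.sum_nonneg fun k _ => mul_nonneg (hP i k) (hQ k j)

lemma diag_entries_nonneg {a : ℕ} (f : Fin a → ℝ) (hf : ∀ i, 0 ≤ f i) :
    ∀ i j, 0 ≤ Matrix.diagonal f i j := by
  intro i j
  rcases eq_or_ne i j with rfl | h
  · simp [hf i]
  · simp [Matrix.diagonal_apply_ne _ h]

end helpers

lemma key_fixed_point' {u : ℕ} (hu : 0 < u) (A : Matrix (Fin u) (Fin u) ℝ)
    (hA : ∀ i j, 0 ≤ A i j)
    (S d c : Fin u → ℝ) (hS : ∀ i, 0 < S i) (hd : ∀ i, 0 < d i) (hc : ∀ i, 0 < c i)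
    (hrowA : ∀ i, ∃ k, 0 < A i k)
    (w : Fin u → ℝ) (hw : ∀ i, 0 < w i) (r : ℝ) (hr : 1 < r)
    (hsub : ∀ i, r * (d i * w i) ≤ S i * (A *ᵥ w) i) :
    ∃! I : Fin u → ℝ, (∀ i, 0 < I i) ∧
      ∀ i, S i * (A *ᵥ I) i = I i * (d i + c i * (A *ᵥ I) i) := by
  haveI : Nonempty (Fin u) := Fin.pos_iff_nonempty.mp hu
  have hne : (Finset.univ : Finset (Fin u)).Nonempty := Finset.univ_nonempty
  -- basic facts about A *ᵥ
  have hAv_nonneg : ∀ (x : Fin u → ℝ), (∀ k, 0 ≤ x k) → ∀ i, 0 ≤ (A *ᵥ x) i := by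
    intro x hx i
    simp only [Matrix.mulVec, dotProduct]
    apply Finset.sum_nonneg
    intro k _
    exact mul_nonneg (hA i k) (hx k)
  have hAv_mono : ∀ (x y : Fin u → ℝ), (∀ k, x k ≤ y k) → ∀ i, (A *ᵥ x) i ≤ (A *ᵥ y) i := by
    intro x y hxy i
    simp only [Matrix.mulVec, dotProduct]
    apply Finset.sum_le_sum
    intro k _
    exact mul_le_mul_of_nonneg_left (hxy k) (hA i k)
  have hAv_pos : ∀ (x : Fin u → ℝ), (∀ k, 0 < x k) → ∀ i, 0 < (A *ᵥ x) i := by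
    intro x hx i
    obtain ⟨k, hk⟩ := hrowA i
    simp only [Matrix.mulVec, dotProduct]
    apply Finset.sum_pos'
    · intro l _; exact mul_nonneg (hA i l) (hx l).le
    · exact ⟨k, Finset.mem_univ k, mul_pos hk (hx k)⟩
  have hden : ∀ (i : Fin u) (t : ℝ), 0 ≤ t → 0 < d i + c i * t := by
    intro i t ht
    have := mul_nonneg (hc i).le ht
    linarith [hd i]
  -- the monotone map T
  set T : (Fin u → ℝ) → (Fin u → ℝ) :=
    fun x i => S i * (A *ᵥ x) i / (d i + c i * (A *ᵥ x) i) with hT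
  have hφmono : ∀ (i : Fin u) (s t : ℝ), 0 ≤ s → s ≤ t →
      S i * s / (d i + c i * s) ≤ S i * t / (d i + c i * t) := by
    intro i s t hs hst
    rw [div_le_div_iff₀ (hden i s hs) (hden i t (hs.trans hst))]
    nlinarith [mul_le_mul_of_nonneg_left hst (mul_nonneg (hS i).le (hd i).le), hc i]
  have hTmono : ∀ (x y : Fin u → ℝ), (∀ k, 0 ≤ x k) → (∀ k, x k ≤ y k) →
      ∀ i, T x i ≤ T y i := by
    intro x y hx hxy i
    exact hφmono i _ _ (hAv_nonneg x hx i) (hAv_mono x y hxy i)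
  have hTnonneg : ∀ (x : Fin u → ℝ), (∀ k, 0 ≤ x k) → ∀ i, 0 ≤ T x i := by
    intro x hx i
    exact div_nonneg (mul_nonneg (hS i).le (hAv_nonneg x hx i))
      (hden i _ (hAv_nonneg x hx i)).le
  have hTle : ∀ (x : Fin u → ℝ), (∀ k, 0 ≤ x k) → ∀ i, T x i ≤ S i / c i := by
    intro x hx i
    have h0 := hAv_nonneg x hx i
    rw [div_le_div_iff₀ (hden i _ h0) (hc i)]
    nlinarith [hS i, hd i, hc i]
  -- fixed point equation equivalence
  have hfix_iff : ∀ (x : Fin u → ℝ), (∀ k, 0 ≤ x k) →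
      ((∀ i, S i * (A *ᵥ x) i = x i * (d i + c i * (A *ᵥ x) i)) ↔ ∀ i, T x i = x i) := by
    intro x hx
    constructor
    · intro h i
      rw [hT]
      rw [div_eq_iff (hden i _ (hAv_nonneg x hx i)).ne']
      rw [h i]
    · intro h i
      have := h i
      rw [hT, div_eq_iff (hden i _ (hAv_nonneg x hx i)).ne'] at this
      rw [this]
  -- choose ε
  have hAw_pos : ∀ i, 0 < (A *ᵥ w) i := hAv_pos w hw
  set ε : ℝ := min 1 (Finset.univ.inf' hne fun i => (r - 1) * d i / (c i * (A *ᵥ w) i)) with hεdef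
  have hε : 0 < ε := by
    apply lt_min one_pos
    rw [Finset.lt_inf'_iff]
    intro i _
    exact div_pos (mul_pos (by linarith) (hd i)) (mul_pos (hc i) (hAw_pos i))
  have hεle : ∀ i, ε * (c i * (A *ᵥ w) i) ≤ (r - 1) * d i := by
    intro i
    have h1 : ε ≤ (r - 1) * d i / (c i * (A *ᵥ w) i) :=
      le_trans (min_le_right _ _) (Finset.inf'_le _ (Finset.mem_univ i))
    exact (le_div_iff₀ (mul_pos (hc i) (hAw_pos i))).1 h1
  -- starting point
  set x0 : Fin u → ℝ := ε • w with hx0def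
  have hx0pos : ∀ k, 0 < x0 k := fun k => mul_pos hε (hw k)
  have hAx0 : ∀ i, (A *ᵥ x0) i = ε * (A *ᵥ w) i := by
    intro i
    rw [hx0def, Matrix.mulVec_smul]
    rfl
  have hstep : ∀ i, x0 i ≤ T x0 i := by
    intro i
    rw [hT]
    simp only
    rw [le_div_iff₀ (by rw [hAx0]; exact hden i _ (mul_nonneg hε.le (hAw_pos i).le))]
    rw [hAx0]
    have hkey : w i * (d i + c i * (ε * (A *ᵥ w) i)) ≤ S i * (A *ᵥ w) i := by
      have h1 : w i * (c i * (ε * (A *ᵥ w) i)) ≤ w i * ((r - 1) * d i) := by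
        apply mul_le_mul_of_nonneg_left _ (hw i).le
        calc c i * (ε * (A *ᵥ w) i) = ε * (c i * (A *ᵥ w) i) := by ring
          _ ≤ (r - 1) * d i := hεle i
      calc w i * (d i + c i * (ε * (A *ᵥ w) i))
          = w i * d i + w i * (c i * (ε * (A *ᵥ w) i)) := by ring
        _ ≤ w i * d i + w i * ((r - 1) * d i) := by linarith
        _ = r * (d i * w i) := by ring
        _ ≤ S i * (A *ᵥ w) i := hsub i
    calc x0 i * (d i + c i * (ε * (A *ᵥ w) i))
        = ε * (w i * (d i + c i * (ε * (A *ᵥ w) i))) := by rw [hx0def]; simp [smul_eq_mul]; ring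
      _ ≤ ε * (S i * (A *ᵥ w) i) := by
          exact mul_le_mul_of_nonneg_left hkey hε.le
      _ = S i * (ε * (A *ᵥ w) i) := by ring
  -- the iteration
  set seq : ℕ → (Fin u → ℝ) := fun n => T^[n] x0 with hseqdef
  have hseq_succ : ∀ n, seq (n + 1) = T (seq n) := by
    intro n
    rw [hseqdef]
    simp only
    rw [Function.iterate_succ_apply']
  have hseq0 : seq 0 = x0 := rfl
  have hmain : ∀ n, (∀ k, 0 ≤ seq n k) ∧ (∀ k, seq n k ≤ seq (n + 1) k) := by
    intro n
    induction n with
    | zero =>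
      refine ⟨fun k => (hx0pos k).le, ?_⟩
      rw [hseq_succ, hseq0]
      exact hstep
    | succ n ih =>
      constructor
      · intro k
        rw [hseq_succ]
        exact hTnonneg (seq n) ih.1 k
      · intro k
        rw [hseq_succ n, hseq_succ (n + 1), hseq_succ n]
        exact hTmono (seq n) (T (seq n)) ih.1 (fun l => by rw [← hseq_succ]; exact ih.2 l) k
  have hbdd : ∀ n k, seq n k ≤ S k / c k := by
    intro n k
    calc seq n k ≤ seq (n + 1) k := (hmain n).2 k
      _ = T (seq n) k := by rw [hseq_succ]
      _ ≤ S k / c k := hTle (seq n) (hmain n).1 k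
  have hmonok : ∀ k, Monotone (fun n => seq n k) :=
    fun k => monotone_nat_of_le_succ (fun n => (hmain n).2 k)
  set I : Fin u → ℝ := fun k => ⨆ n, seq n k with hIdef
  have htend : ∀ k, Filter.Tendsto (fun n => seq n k) Filter.atTop (nhds (I k)) := by
    intro k
    apply tendsto_atTop_ciSup (hmonok k)
    exact ⟨S k / c k, by rintro y ⟨n, rfl⟩; exact hbdd n k⟩
  have hIge : ∀ k, x0 k ≤ I k := by
    intro k
    have := le_ciSup (f := fun n => seq n k) ⟨S k / c k, by rintro y ⟨n, rfl⟩; exact hbdd n k⟩ 0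
    rwa [hseq0] at this
  have hIpos : ∀ k, 0 < I k := fun k => lt_of_lt_of_le (hx0pos k) (hIge k)
  have hInn : ∀ k, 0 ≤ I k := fun k => (hIpos k).le
  have htendI : Filter.Tendsto seq Filter.atTop (nhds I) := tendsto_pi_nhds.2 htend
  have hcontA : ∀ k, Continuous (fun x : Fin u → ℝ => (A *ᵥ x) k) := by
    intro k
    simp only [Matrix.mulVec, dotProduct]
    exact continuous_finset_sum _ (fun j _ => continuous_const.mul (continuous_apply j))
  have hTfix : ∀ k, T I k = I k := by
    intro k
    have hcont : ContinuousAt (fun x : Fin u → ℝ => T x k) I := by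
      rw [hT]
      simp only
      apply ContinuousAt.div
      · exact (continuous_const.mul (hcontA k)).continuousAt
      · exact (continuous_const.add (continuous_const.mul (hcontA k))).continuousAt
      · exact (hden k _ (hAv_nonneg I hInn k)).ne'
    have h2 : Filter.Tendsto (fun n => T (seq n) k) Filter.atTop (nhds (T I k)) :=
      (hcont.tendsto.comp htendI)
    have h2' : Filter.Tendsto (fun n => seq (n + 1) k) Filter.atTop (nhds (T I k)) := by
      apply h2.congr
      intro n
      rw [hseq_succ]
    have h3 : Filter.Tendsto (fun n => seq (n + 1) k) Filter.atTop (nhds (I k)) :=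
      (htend k).comp (Filter.tendsto_add_atTop_nat 1)
    exact tendsto_nhds_unique h2' h3
  -- uniqueness claim
  have hclaim : ∀ P Q : Fin u → ℝ, (∀ k, 0 < P k) → (∀ k, 0 < Q k) →
      (∀ i, T P i = P i) → (∀ i, T Q i = Q i) → ∀ k, Q k ≤ P k := by
    intro P Q hP hQ hPfix hQfix
    by_contra hcon
    push_neg at hcon
    obtain ⟨k0, hk0⟩ := hcon
    set θ : ℝ := Finset.univ.inf' hne (fun i => P i / Q i) with hθdef
    obtain ⟨i, _, hieq⟩ := Finset.exists_mem_eq_inf' hne (fun i => P i / Q i)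
    have hθpos : 0 < θ := by
      rw [hθdef, Finset.lt_inf'_iff]
      intro j _
      exact div_pos (hP j) (hQ j)
    have hθlt : θ < 1 := by
      calc θ ≤ P k0 / Q k0 := Finset.inf'_le _ (Finset.mem_univ k0)
        _ < 1 := (div_lt_one (hQ k0)).2 hk0
    have hθle : ∀ l, θ * Q l ≤ P l := by
      intro l
      have h1 : θ ≤ P l / Q l := Finset.inf'_le _ (Finset.mem_univ l)
      exact (le_div_iff₀ (hQ l)).1 h1
    have hPi : P i = θ * Q i := by
      have h : θ = P i / Q i := hieq
      rw [h, div_mul_cancel₀ _ (hQ i).ne']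
    have ha : 0 < (A *ᵥ Q) i := hAv_pos Q hQ i
    set a : ℝ := (A *ᵥ Q) i with hadef
    have hAθQ : (A *ᵥ (θ • Q)) i = θ * a := by rw [Matrix.mulVec_smul]; rfl
    have hmono1 : T (θ • Q) i ≤ T P i := by
      apply hTmono
      · intro l; exact mul_nonneg hθpos.le (hQ l).le
      · intro l; exact hθle l
    have hQTi : T Q i = Q i := hQfix i
    have hstrict : θ * Q i < T (θ • Q) i := by
      have hQeq : Q i = S i * a / (d i + c i * a) := by
        rw [← hQTi, hT]
      rw [hT]
      simp only
      rw [hAθQ, hQeq, mul_div_assoc']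
      rw [div_lt_div_iff₀ (hden i a ha.le) (hden i (θ * a) (mul_nonneg hθpos.le ha.le))]
      have hkey := mul_pos (mul_pos (mul_pos hθpos (hS i)) ha)
        (mul_pos (mul_pos (hc i) ha) (sub_pos.2 hθlt))
      nlinarith [hkey]
    have : P i < P i := by
      calc P i = θ * Q i := hPi
        _ < T (θ • Q) i := hstrict
        _ ≤ T P i := hmono1
        _ = P i := hPfix i
    exact lt_irrefl _ this
  -- conclude
  refine ⟨I, ⟨hIpos, (hfix_iff I hInn).2 hTfix⟩, ?_⟩
  rintro J ⟨hJpos, hJeq⟩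
  have hJfix : ∀ i, T J i = J i := (hfix_iff J (fun k => (hJpos k).le)).1 hJeq
  funext k
  exact le_antisymm (hclaim I J hIpos hJpos hTfix hJfix k)
    (hclaim J I hJpos hIpos hJfix hTfix k)

/-- in the identical-mobility model with no disease-induced
mortality, if `B > 0`, `M·Mᵀ` is irreducible, every column of `M` has a positive
entry, and `R0^Eq = ρ(diag(S*)·M·diag(B)·diag(MᵀS*)⁻¹·Mᵀ·diag(ν)·diag((μ+ν)∘(μ+γ))⁻¹) > 1`,
then there is a unique endemic equilibrium. -/
theorem stmt17 (u v : ℕ) (hu : 1 ≤ u) (hv : 1 ≤ v)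
    (Λ μ ν γ η : Fin u → ℝ)
    (hΛ : ∀ i, 0 < Λ i) (hμ : ∀ i, 0 < μ i) (hν : ∀ i, 0 < ν i) (hγ : ∀ i, 0 < γ i)
    (hη : ∀ i, 0 ≤ η i)
    (B : Fin v → ℝ) (hB : ∀ j, 0 < B j)
    (M : Matrix (Fin u) (Fin v) ℝ) (hM : ∀ i j, 0 ≤ M i j)
    (Sstar : Fin u → ℝ) (hSstar : ∀ i, Sstar i = Λ i / μ i)
    (hcol : ∀ j, ∃ i, 0 < M i j)
    (hirr : ∀ i j : Fin u, ∃ n : ℕ, 1 ≤ n ∧ 0 < ((M * Mᵀ) ^ n) i j)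
    (hR0 : 1 < specRad (Matrix.diagonal Sstar * M * Matrix.diagonal B *
      Matrix.diagonal (fun j => ((Mᵀ *ᵥ Sstar) j)⁻¹) * Mᵀ *
      Matrix.diagonal ν * Matrix.diagonal (fun i => ((μ i + ν i) * (μ i + γ i))⁻¹))) :
    ∃! x : (Fin u → ℝ) × (Fin u → ℝ) × (Fin u → ℝ) × (Fin u → ℝ),
      (∀ i, 0 < x.2.2.1 i) ∧
      0 = Λ - (Matrix.diagonal x.1 * M * Matrix.diagonal B *
            Matrix.diagonal (fun j => ((Mᵀ *ᵥ Sstar) j)⁻¹) * Mᵀ) *ᵥ x.2.2.1 -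
          Matrix.diagonal μ *ᵥ x.1 + Matrix.diagonal η *ᵥ x.2.2.2 ∧
      0 = (Matrix.diagonal x.1 * M * Matrix.diagonal B *
            Matrix.diagonal (fun j => ((Mᵀ *ᵥ Sstar) j)⁻¹) * Mᵀ) *ᵥ x.2.2.1 -
          Matrix.diagonal (fun i => ν i + μ i) *ᵥ x.2.1 ∧
      0 = Matrix.diagonal ν *ᵥ x.2.1 -
          Matrix.diagonal (fun i => γ i + μ i) *ᵥ x.2.2.1 ∧
      0 = Matrix.diagonal γ *ᵥ x.2.2.1 -
          Matrix.diagonal (fun i => η i + μ i) *ᵥ x.2.2.2 := by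
  have hupos : 0 < u := hu
  haveI : Nonempty (Fin u) := Fin.pos_iff_nonempty.mp hupos
  haveI : Nonempty (Fin v) := Fin.pos_iff_nonempty.mp hv
  have hneu : (Finset.univ : Finset (Fin u)).Nonempty := Finset.univ_nonempty
  have hnev : (Finset.univ : Finset (Fin v)).Nonempty := Finset.univ_nonempty
  -- basic positivity
  have hSpos : ∀ i, 0 < Sstar i := fun i => by rw [hSstar i]; exact div_pos (hΛ i) (hμ i)
  have hMTS : ∀ j, 0 < (Mᵀ *ᵥ Sstar) j := by
    intro j
    obtain ⟨i, hi⟩ := hcol j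
    simp only [Matrix.mulVec, dotProduct, Matrix.transpose_apply]
    exact Finset.sum_pos' (fun l _ => mul_nonneg (hM l j) (hSpos l).le)
      ⟨i, Finset.mem_univ i, mul_pos hi (hSpos i)⟩
  set g : Fin v → ℝ := fun j => ((Mᵀ *ᵥ Sstar) j)⁻¹ with hgdef
  have hgpos : ∀ j, 0 < g j := fun j => inv_pos.2 (hMTS j)
  set A : Matrix (Fin u) (Fin u) ℝ := M * Matrix.diagonal B * Matrix.diagonal g * Mᵀ with hAdef
  -- entry formula for A
  have hAentry : ∀ i k, A i k = ∑ j, M i j * B j * g j * M k j := by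
    intro i k
    rw [hAdef, Matrix.mul_apply]
    apply Finset.sum_congr rfl
    intro j _
    rw [Matrix.mul_diagonal, Matrix.mul_diagonal, Matrix.transpose_apply]
  have hAnn : ∀ i k, 0 ≤ A i k := by
    intro i k
    rw [hAentry]
    exact Finset.sum_nonneg fun j _ => mul_nonneg (mul_nonneg (mul_nonneg (hM i j) (hB j).le)
      (hgpos j).le) (hM k j)
  -- lower bound on A by MMᵀ
  set εB : ℝ := Finset.univ.inf' hnev (fun j => B j * g j) with hεBdef
  have hεBpos : 0 < εB := by
    rw [hεBdef, Finset.lt_inf'_iff]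
    exact fun j _ => mul_pos (hB j) (hgpos j)
  have hMMT_entry : ∀ i k, (M * Mᵀ) i k = ∑ j, M i j * M k j := by
    intro i k
    rw [Matrix.mul_apply]
    exact Finset.sum_congr rfl fun j _ => by rw [Matrix.transpose_apply]
  have hMMTnn : ∀ i k, 0 ≤ (M * Mᵀ) i k := by
    intro i k
    rw [hMMT_entry]
    exact Finset.sum_nonneg fun j _ => mul_nonneg (hM i j) (hM k j)
  have hAge : ∀ i k, εB * (M * Mᵀ) i k ≤ A i k := by
    intro i k
    rw [hAentry, hMMT_entry, Finset.mul_sum]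
    apply Finset.sum_le_sum
    intro j _
    have h1 : εB ≤ B j * g j := Finset.inf'_le _ (Finset.mem_univ j)
    have h2 : 0 ≤ M i j * M k j := mul_nonneg (hM i j) (hM k j)
    calc εB * (M i j * M k j) ≤ (B j * g j) * (M i j * M k j) :=
          mul_le_mul_of_nonneg_right h1 h2
      _ = M i j * B j * g j * M k j := by ring
  -- no zero rows
  have hrowMMT : ∀ i, ∃ k, 0 < (M * Mᵀ) i k := by
    intro i
    by_contra hcon
    push_neg at hcon
    have hz : ∀ k, (M * Mᵀ) i k = 0 := fun k => le_antisymm (hcon k) (hMMTnn i k)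
    obtain ⟨n, hn1, hnpos⟩ := hirr i i
    have hzn : ∀ m, 1 ≤ m → ∀ k, ((M * Mᵀ) ^ m) i k = 0 := by
      intro m hm
      induction m with
      | zero => omega
      | succ m ih =>
        intro k
        rcases Nat.eq_or_lt_of_le hm with h | h
        · have : m = 0 := by omega
          subst this
          simpa using hz k
        · rw [pow_succ, Matrix.mul_apply]
          apply Finset.sum_eq_zero
          intro l _
          rw [ih (by omega) l, zero_mul]
    rw [hzn n hn1 i] at hnpos
    exact lt_irrefl _ hnpos
  have hrowA : ∀ i, ∃ k, 0 < A i k := by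
    intro i
    obtain ⟨k, hk⟩ := hrowMMT i
    exact ⟨k, lt_of_lt_of_le (mul_pos hεBpos hk) (hAge i k)⟩
  -- d and c
  set d : Fin u → ℝ := fun i => (μ i + ν i) * (μ i + γ i) / ν i with hddef
  have hdpos : ∀ i, 0 < d i := fun i =>
    div_pos (mul_pos (by linarith [hμ i, hν i]) (by linarith [hμ i, hγ i])) (hν i)
  set c : Fin u → ℝ := fun i => d i - η i * γ i / (η i + μ i) with hcdef
  have hημ : ∀ i, 0 < η i + μ i := fun i => by linarith [hη i, hμ i]
  have hcpos : ∀ i, 0 < c i := by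
    intro i
    have h1 : η i * γ i / (η i + μ i) ≤ γ i := by
      rw [div_le_iff₀ (hημ i)]
      nlinarith [hγ i, hμ i, hη i]
    have h2 : γ i < d i := by
      rw [hddef]
      simp only
      rw [lt_div_iff₀ (hν i)]
      nlinarith [hμ i, hν i, hγ i]
    rw [hcdef]
    simp only
    linarith
  set c' : Fin u → ℝ := fun i => c i / μ i with hc'def
  have hc'pos : ∀ i, 0 < c' i := fun i => div_pos (hcpos i) (hμ i)
  clear_value c'
  clear_value c
  clear_value d
  -- the linearization matrices
  set e : Fin u → ℝ := fun i => ((μ i + ν i) * (μ i + γ i))⁻¹ with hedef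
  have hepos : ∀ i, 0 < e i := fun i =>
    inv_pos.2 (mul_pos (by linarith [hμ i, hν i]) (by linarith [hμ i, hγ i]))
  clear_value e
  have hW : Matrix.diagonal Sstar * M * Matrix.diagonal B * Matrix.diagonal g * Mᵀ =
      Matrix.diagonal Sstar * A := by
    rw [hAdef]
    simp only [Matrix.mul_assoc]
  set X : Matrix (Fin u) (Fin u) ℝ :=
    Matrix.diagonal Sstar * A * Matrix.diagonal ν * Matrix.diagonal e with hXdef
  have hXentry : ∀ i k, X i k = Sstar i * A i k * ν k * e k := by
    intro i k
    rw [hXdef, Matrix.mul_diagonal, Matrix.mul_diagonal, Matrix.diagonal_mul]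
  have hXnn : ∀ i k, 0 ≤ X i k := by
    intro i k
    rw [hXentry]
    exact mul_nonneg (mul_nonneg (mul_nonneg (hSpos i).le (hAnn i k)) (hν k).le) (hepos k).le
  have hR0' : 1 < specRad X := by
    rw [hXdef, ← hW]
    exact hR0
  obtain ⟨r, w₀, hr, hw₀nn, hw₀ne, hw₀sub⟩ := exists_subsolution' X hXnn hR0'
  -- transfer to L := diag(Sstar/d) * A
  set L : Matrix (Fin u) (Fin u) ℝ := Matrix.diagonal (fun i => Sstar i / d i) * A with hLdef
  have hLentry : ∀ i k, L i k = Sstar i / d i * A i k := by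
    intro i k
    rw [hLdef, Matrix.diagonal_mul]
  have hLnn : ∀ i k, 0 ≤ L i k := by
    intro i k
    rw [hLentry]
    exact mul_nonneg (div_nonneg (hSpos i).le (hdpos i).le) (hAnn i k)
  set w₁ : Fin u → ℝ := fun k => w₀ k / d k with hw₁def
  have hw₁nn : ∀ k, 0 ≤ w₁ k := fun k => div_nonneg (hw₀nn k) (hdpos k).le
  have hXL : ∀ i, (X *ᵥ w₀) i = d i * (L *ᵥ w₁) i := by
    intro i
    simp only [Matrix.mulVec, dotProduct, Finset.mul_sum]
    apply Finset.sum_congr rfl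
    intro k _
    have hek : e k = (ν k * d k)⁻¹ := by
      rw [hedef, hddef]
      simp only
      congr 1
      rw [mul_div_assoc', mul_div_cancel_left₀ _ (hν k).ne']
    have hw1k : w₁ k = w₀ k / d k := rfl
    rw [hXentry, hLentry, hw1k, hek]
    field_simp [(hν k).ne', (hdpos i).ne', (hdpos k).ne']
  have hsubL : ∀ i, r * w₁ i ≤ (L *ᵥ w₁) i := by
    intro i
    have h1 : r * w₀ i ≤ (X *ᵥ w₀) i := hw₀sub i
    rw [hXL i] at h1
    have hw1i : w₁ i = w₀ i / d i := rfl
    rw [hw1i, ← mul_div_assoc, div_le_iff₀ (hdpos i)]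
    calc r * w₀ i ≤ d i * (L *ᵥ w₁) i := h1
      _ = (L *ᵥ w₁) i * d i := by ring
  -- build a strictly positive subsolution w'
  obtain ⟨j0, hj0⟩ : ∃ j, 0 < w₁ j := by
    by_contra hcon
    push_neg at hcon
    apply hw₀ne
    funext k
    have h1 : w₁ k = 0 := le_antisymm (hcon k) (hw₁nn k)
    rw [hw₁def] at h1
    simp only at h1
    have := (div_eq_zero_iff.1 h1).resolve_right (hdpos k).ne'
    simpa using this
  set ε' : ℝ := (Finset.univ.inf' hneu fun i => Sstar i / d i) * εB with hε'def
  have hε'pos : 0 < ε' := by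
    apply mul_pos _ hεBpos
    rw [Finset.lt_inf'_iff]
    exact fun i _ => div_pos (hSpos i) (hdpos i)
  have hLge : ∀ i k, (ε' • (M * Mᵀ)) i k ≤ L i k := by
    intro i k
    have h0 : (ε' • (M * Mᵀ)) i k = ε' * (M * Mᵀ) i k := rfl
    rw [h0, hLentry, hε'def]
    calc (Finset.univ.inf' hneu fun i => Sstar i / d i) * εB * (M * Mᵀ) i k
        ≤ (Sstar i / d i) * (εB * (M * Mᵀ) i k) := by
          rw [← mul_assoc]
          apply mul_le_mul_of_nonneg_right _ (hMMTnn i k)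
          apply mul_le_mul_of_nonneg_right _ hεBpos.le
          exact Finset.inf'_le _ (Finset.mem_univ i)
      _ ≤ (Sstar i / d i) * A i k :=
          mul_le_mul_of_nonneg_left (hAge i k) (div_nonneg (hSpos i).le (hdpos i).le)
  have hsmulnn : ∀ i k, 0 ≤ (ε' • (M * Mᵀ)) i k := by
    intro i k
    exact mul_nonneg hε'pos.le (hMMTnn i k)
  have hLpow : ∀ (n : ℕ) i k, ε' ^ n * ((M * Mᵀ) ^ n) i k ≤ (L ^ n) i k := by
    intro n i k
    have h := (pow_entry_mono' (ε' • (M * Mᵀ)) L hsmulnn hLge n i k).2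
    rwa [smul_pow, Matrix.smul_apply, smul_eq_mul] at h
  have hLpownn : ∀ (n : ℕ) i k, 0 ≤ (L ^ n) i k :=
    fun n i k => (pow_entry_mono' L L hLnn (fun _ _ => le_refl _) n i k).1
  -- choose N
  set f : Fin u → ℕ := fun i => (hirr i j0).choose with hfdef
  set N : ℕ := Finset.univ.sup f with hNdef
  set w' : Fin u → ℝ := fun i => ∑ n ∈ Finset.range (N + 1), ((L ^ n) *ᵥ w₁) i with hw'def
  have hynn : ∀ (n : ℕ) i, 0 ≤ ((L ^ n) *ᵥ w₁) i :=
    fun n i => mv_nonneg' _ (hLpownn n) _ hw₁nn i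
  have hw'pos : ∀ i, 0 < w' i := by
    intro i
    obtain ⟨hn1, hnpos⟩ := (hirr i j0).choose_spec
    have hfi : f i ∈ Finset.range (N + 1) := by
      rw [Finset.mem_range, hNdef]
      exact Nat.lt_succ_of_le (Finset.le_sup (Finset.mem_univ i))
    have hterm : 0 < ((L ^ (f i)) *ᵥ w₁) i := by
      have h1 : 0 < ε' ^ (f i) * ((M * Mᵀ) ^ (f i)) i j0 :=
        mul_pos (pow_pos hε'pos _) hnpos
      have h2 : 0 < (L ^ (f i)) i j0 := lt_of_lt_of_le h1 (hLpow (f i) i j0)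
      simp only [Matrix.mulVec, dotProduct]
      apply Finset.sum_pos'
      · intro l _
        exact mul_nonneg (hLpownn _ i l) (hw₁nn l)
      · exact ⟨j0, Finset.mem_univ j0, mul_pos h2 hj0⟩
    rw [hw'def]
    exact lt_of_lt_of_le hterm
      (Finset.single_le_sum (fun n _ => hynn n i) hfi)
  have hychain : ∀ (n : ℕ) i, r * ((L ^ n) *ᵥ w₁) i ≤ ((L ^ (n + 1)) *ᵥ w₁) i := by
    intro n
    induction n with
    | zero =>
      intro i
      simpa [Matrix.one_mulVec] using hsubL i
    | succ n ih =>
      intro i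
      have h1 : ∀ k, (r • ((L ^ n) *ᵥ w₁)) k ≤ ((L ^ (n + 1)) *ᵥ w₁) k := by
        intro k
        simpa [smul_eq_mul] using ih k
      have h2 := mv_mono' L hLnn _ _ h1 i
      rw [Matrix.mulVec_smul] at h2
      calc r * ((L ^ (n + 1)) *ᵥ w₁) i = (r • (L *ᵥ ((L ^ n) *ᵥ w₁))) i := by
            rw [Matrix.mulVec_mulVec, ← pow_succ']
            rfl
        _ ≤ (L *ᵥ ((L ^ (n + 1)) *ᵥ w₁)) i := h2
        _ = ((L ^ (n + 2)) *ᵥ w₁) i := by rw [Matrix.mulVec_mulVec, ← pow_succ']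
  have hsubw' : ∀ i, r * w' i ≤ (L *ᵥ w') i := by
    intro i
    have hLw' : (L *ᵥ w') i = ∑ n ∈ Finset.range (N + 1), ((L ^ (n + 1)) *ᵥ w₁) i := by
      have hswap : (L *ᵥ w') i = ∑ n ∈ Finset.range (N + 1), (L *ᵥ ((L ^ n) *ᵥ w₁)) i := by
        simp only [Matrix.mulVec, dotProduct, hw'def, Finset.mul_sum]
        exact Finset.sum_comm
      rw [hswap]
      apply Finset.sum_congr rfl
      intro n _
      rw [Matrix.mulVec_mulVec, ← pow_succ']
    rw [hLw', hw'def]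
    simp only [Finset.mul_sum]
    exact Finset.sum_le_sum fun n _ => hychain n i
  -- final subsolution hypothesis for the key lemma
  have hsubkey : ∀ i, r * (d i * w' i) ≤ Sstar i * (A *ᵥ w') i := by
    intro i
    have h1 : (L *ᵥ w') i = Sstar i / d i * (A *ᵥ w') i := by
      rw [hLdef, ← Matrix.mulVec_mulVec]
      rw [Matrix.mulVec_diagonal]
    have h2 := hsubw' i
    rw [h1] at h2
    have h3 := mul_le_mul_of_nonneg_left h2 (hdpos i).le
    calc r * (d i * w' i) = d i * (r * w' i) := by ring
      _ ≤ d i * (Sstar i / d i * (A *ᵥ w') i) := h3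
      _ = Sstar i * (A *ᵥ w') i := by
          rw [← mul_assoc, mul_comm (d i) (Sstar i / d i), div_mul_cancel₀ _ (hdpos i).ne']
  -- apply the key fixed point theorem
  obtain ⟨I₀, ⟨hI₀pos, hI₀eq⟩, hI₀uniq⟩ :=
    key_fixed_point' hupos A hAnn Sstar d c' hSpos hdpos hc'pos hrowA w' hw'pos r hr hsubkey
  -- scalar algebra facts
  have hμS : ∀ i, μ i * Sstar i = Λ i := by
    intro i
    rw [hSstar i, mul_comm, div_mul_cancel₀ _ (hμ i).ne']
  have hc'μ : ∀ i, c' i * μ i = c i := by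
    intro i
    rw [hc'def]
    simp only
    rw [div_mul_cancel₀ _ (hμ i).ne']
  have hcdq : ∀ i, c i = d i - η i * γ i / (η i + μ i) := by
    intro i
    rw [hcdef]
  have hdd : ∀ i, d i = (μ i + ν i) * (μ i + γ i) / ν i := by
    intro i
    rw [hddef]
  have hSeq : ∀ (I : Fin u → ℝ),
      (∀ i, Sstar i * (A *ᵥ I) i = I i * (d i + c' i * (A *ᵥ I) i)) →
      ∀ i, (Sstar i - c' i * I i) * (A *ᵥ I) i = d i * I i := by
    intro I hI i
    linear_combination hI i
  -- big matrix component formula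
  have hBig : ∀ (s x : Fin u → ℝ) (i : Fin u),
      ((Matrix.diagonal s * M * Matrix.diagonal B * Matrix.diagonal g * Mᵀ) *ᵥ x) i
        = s i * (A *ᵥ x) i := by
    intro s x i
    have h1 : Matrix.diagonal s * M * Matrix.diagonal B * Matrix.diagonal g * Mᵀ
        = Matrix.diagonal s * A := by
      rw [hAdef]
      simp only [Matrix.mul_assoc]
    rw [h1, ← Matrix.mulVec_mulVec, Matrix.mulVec_diagonal]
  refine ⟨⟨fun i => Sstar i - c' i * I₀ i, fun i => (γ i + μ i) * I₀ i / ν i, I₀,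
      fun i => γ i * I₀ i / (η i + μ i)⟩, ⟨hI₀pos, ?_, ?_, ?_, ?_⟩, ?_⟩
  · -- eq1
    funext i
    simp only [Pi.zero_apply, Pi.sub_apply, Pi.add_apply, Matrix.mulVec_diagonal, hBig]
    linear_combination (hI₀eq i) + hμS i - I₀ i * hc'μ i - I₀ i * hcdq i
  · -- eq2
    funext i
    simp only [Pi.zero_apply, Pi.sub_apply, Matrix.mulVec_diagonal, hBig]
    linear_combination (-1 : ℝ) * (hSeq I₀ hI₀eq i) - I₀ i * hdd i
  · -- eq3
    funext i
    simp only [Pi.zero_apply, Pi.sub_apply, Matrix.mulVec_diagonal]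
    rw [mul_div_assoc', mul_div_cancel_left₀ _ (hν i).ne']
    ring
  · -- eq4
    funext i
    simp only [Pi.zero_apply, Pi.sub_apply, Matrix.mulVec_diagonal]
    rw [mul_div_assoc', mul_div_cancel_left₀ _ (hημ i).ne']
    ring
  · -- uniqueness
    rintro ⟨S, E, I, R⟩ ⟨hIpos, h1, h2, h3, h4⟩
    simp only at hIpos h1 h2 h3 h4
    have h1i : ∀ i, (0 : ℝ) = Λ i - S i * (A *ᵥ I) i - μ i * S i + η i * R i := by
      intro i
      have := congrFun h1 i
      simpa only [Pi.zero_apply, Pi.sub_apply, Pi.add_apply, Matrix.mulVec_diagonal, hBig]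
        using this
    have h2i : ∀ i, (0 : ℝ) = S i * (A *ᵥ I) i - (ν i + μ i) * E i := by
      intro i
      have := congrFun h2 i
      simpa only [Pi.zero_apply, Pi.sub_apply, Matrix.mulVec_diagonal, hBig] using this
    have h3i : ∀ i, (0 : ℝ) = ν i * E i - (γ i + μ i) * I i := by
      intro i
      have := congrFun h3 i
      simpa only [Pi.zero_apply, Pi.sub_apply, Matrix.mulVec_diagonal] using this
    have h4i : ∀ i, (0 : ℝ) = γ i * I i - (η i + μ i) * R i := by
      intro i
      have := congrFun h4 i
      simpa only [Pi.zero_apply, Pi.sub_apply, Matrix.mulVec_diagonal] using this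
    have hEi : ∀ i, E i = (γ i + μ i) * I i / ν i := by
      intro i
      rw [eq_div_iff (hν i).ne']
      linarith [h3i i]
    have hRi : ∀ i, R i = γ i * I i / (η i + μ i) := by
      intro i
      rw [eq_div_iff (hημ i).ne']
      linarith [h4i i]
    have hSAI : ∀ i, S i * (A *ᵥ I) i = d i * I i := by
      intro i
      have h2' := h2i i
      rw [hEi i] at h2'
      have hd' := hdd i
      linear_combination (-1 : ℝ) * h2' - I i * hd'
    have hSi : ∀ i, S i = Sstar i - c' i * I i := by
      intro i
      have hμboth : μ i * S i = μ i * (Sstar i - c' i * I i) := by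
        have h1' := h1i i
        rw [hSAI i, hRi i] at h1'
        linear_combination h1' - hμS i + I i * hc'μ i + I i * hcdq i
      exact mul_left_cancel₀ (hμ i).ne' hμboth
    have hIkey : ∀ i, Sstar i * (A *ᵥ I) i = I i * (d i + c' i * (A *ᵥ I) i) := by
      intro i
      have h := hSAI i
      rw [hSi i] at h
      linear_combination h
    have hII : I = I₀ := hI₀uniq I ⟨hIpos, hIkey⟩
    subst hII
    refine Prod.ext ?_ (Prod.ext ?_ (Prod.ext rfl ?_))
    · funext i
      exact hSi i
    · funext i
      exact hEi i
    · funext i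
      exact hRi i
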